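/- arXiv:2001.10293 — 3 statements merged into one kernel-verified Lean document; each statement's English description precedes it below -/
import Mathlib

section
/- Let V be the unique solution of the ODE V'' + |V|^{2σ} V = 0 with V(0) = 1 and V'(0) = 0, where σ > 0. Then V is a periodic function on ℝ. -/
open Set
open scoped NNReal

/-- Derivative of `u ↦ |u|^(2σ) u`. -/
private lemma phi_hasDerivAt (σ : ℝ) (hσ : 0 < σ) (u : ℝ) :
    HasDerivAt (fun u : ℝ => |u| ^ (2*σ) * u) ((2*σ+1) * |u| ^ (2*σ)) u := by
  have h2σ : (0:ℝ) < 2*σ := by linarith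
  rcases lt_trichotomy u 0 with hu | hu | hu
  · have h0 : HasDerivAt (fun x : ℝ => x ^ (2*σ+1)) ((2*σ+1) * (-u) ^ (2*σ+1-1)) (-u) :=
      Real.hasDerivAt_rpow_const (Or.inl (by linarith))
    have h1 := (h0.comp u (hasDerivAt_neg u)).neg
    have h2 : HasDerivAt (fun x : ℝ => -((-x) ^ (2*σ+1))) ((2*σ+1) * (-u) ^ (2*σ)) u := by
      refine h1.congr_deriv ?_
      rw [add_sub_cancel_right]; ring
    have h3 : HasDerivAt (fun u : ℝ => |u| ^ (2*σ) * u) ((2*σ+1) * (-u) ^ (2*σ)) u := by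
      refine h2.congr_of_eventuallyEq ?_
      filter_upwards [Iio_mem_nhds hu] with x hx
      have hx' : (-x : ℝ) ≠ 0 := by simp; exact ne_of_lt hx
      rw [abs_of_neg hx, Real.rpow_add_one hx']
      ring
    rwa [abs_of_neg hu]
  · subst hu
    have hval : |(0:ℝ)| ^ (2*σ) = 0 := by
      rw [abs_zero, Real.zero_rpow (ne_of_gt h2σ)]
    rw [hval, mul_zero, hasDerivAt_iff_tendsto_slope]
    have hc : ContinuousAt (fun x : ℝ => |x| ^ (2*σ)) 0 := by
      have h1 : ContinuousAt (fun y : ℝ => y ^ (2*σ)) |(0:ℝ)| :=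
        Real.continuousAt_rpow_const _ _ (Or.inr (le_of_lt h2σ))
      exact h1.comp continuous_abs.continuousAt
    have hc' : Filter.Tendsto (fun x : ℝ => |x| ^ (2*σ)) (nhdsWithin 0 {(0:ℝ)}ᶜ) (nhds 0) := by
      have := hc.tendsto
      rw [show |(0:ℝ)| ^ (2*σ) = 0 from hval] at this
      exact this.mono_left nhdsWithin_le_nhds
    refine hc'.congr' ?_
    filter_upwards [self_mem_nhdsWithin] with x hx
    have hx' : (x:ℝ) ≠ 0 := hx
    simp only [slope_def_field, abs_zero]
    rw [Real.zero_rpow (ne_of_gt h2σ)]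
    field_simp
    simp
  · have h0 : HasDerivAt (fun x : ℝ => x ^ (2*σ+1)) ((2*σ+1) * u ^ (2*σ+1-1)) u :=
      Real.hasDerivAt_rpow_const (Or.inl (ne_of_gt hu))
    have h3 : HasDerivAt (fun u : ℝ => |u| ^ (2*σ) * u) ((2*σ+1) * u ^ (2*σ)) u := by
      have h0' : HasDerivAt (fun x : ℝ => x ^ (2*σ+1)) ((2*σ+1) * u ^ (2*σ)) u := by
        convert h0 using 2; ring
      refine h0'.congr_of_eventuallyEq ?_
      filter_upwards [Ioi_mem_nhds hu] with x hx
      rw [abs_of_pos hx, Real.rpow_add_one (ne_of_gt hx)]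
    rwa [abs_of_pos hu]

/-- Uniqueness for the second-order ODE `y'' = -|y|^(2σ) y`. -/
private lemma ode_unique (σ : ℝ) (hσ : 0 < σ) (f g f' g' : ℝ → ℝ)
    (hdf : ∀ t, HasDerivAt f (f' t) t)
    (hdf' : ∀ t, HasDerivAt f' (-(|f t| ^ (2*σ) * f t)) t)
    (hdg : ∀ t, HasDerivAt g (g' t) t)
    (hdg' : ∀ t, HasDerivAt g' (-(|g t| ^ (2*σ) * g t)) t)
    (a : ℝ) (h1 : f a = g a) (h2 : f' a = g' a) : ∀ t, f t = g t := by
  intro t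
  set b : ℝ := |t - a| + 1 with hb
  have hbpos : 0 < b := by positivity
  have htmem : t ∈ Icc (a - b) (a + b) := by
    constructor
    · have := neg_abs_le (t - a); simp only [hb]; linarith
    · have := le_abs_self (t - a); simp only [hb]; linarith
  set F : ℝ → ℝ × ℝ := fun s => (f s, f' s) with hF
  set G : ℝ → ℝ × ℝ := fun s => (g s, g' s) with hG
  have hfc : Continuous f := by
    rw [continuous_iff_continuousAt]; exact fun s => (hdf s).continuousAt
  have hf'c : Continuous f' := by
    rw [continuous_iff_continuousAt]; exact fun s => (hdf' s).continuousAt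
  have hgc : Continuous g := by
    rw [continuous_iff_continuousAt]; exact fun s => (hdg s).continuousAt
  have hg'c : Continuous g' := by
    rw [continuous_iff_continuousAt]; exact fun s => (hdg' s).continuousAt
  have hFc : Continuous F := hfc.prodMk hf'c
  have hGc : Continuous G := hgc.prodMk hg'c
  obtain ⟨C₁, hC₁⟩ := (isCompact_Icc (a := a - b) (b := a + b)).exists_bound_of_continuousOn
    hFc.continuousOn
  obtain ⟨C₂, hC₂⟩ := (isCompact_Icc (a := a - b) (b := a + b)).exists_bound_of_continuousOn
    hGc.continuousOn
  set R : ℝ := max C₁ C₂ with hR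
  have hamem : a ∈ Icc (a - b) (a + b) := ⟨by linarith, by linarith⟩
  have hR0 : 0 ≤ R :=
    le_trans (norm_nonneg (F a)) (le_trans (hC₁ a hamem) (le_max_left _ _))
  set st : Set (ℝ × ℝ) := {x | |x.1| ≤ R} with hst
  set K2 : ℝ≥0 := Real.toNNReal ((2*σ+1) * R ^ (2*σ)) with hK2
  have hφ : LipschitzOnWith K2 (fun u : ℝ => -(|u| ^ (2*σ) * u)) (Icc (-R) R) := by
    refine (convex_Icc _ _).lipschitzOnWith_of_nnnorm_hasDerivWithin_le
      (f' := fun u => -((2*σ+1) * |u| ^ (2*σ)))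
      (fun x hx => ((phi_hasDerivAt σ hσ x).neg).hasDerivWithinAt) ?_
    intro x hx
    have hx' : |x| ≤ R := abs_le.mpr ⟨hx.1, hx.2⟩
    have h2σ : (0:ℝ) ≤ 2*σ := by linarith
    have hle : |x| ^ (2*σ) ≤ R ^ (2*σ) := Real.rpow_le_rpow (abs_nonneg x) hx' h2σ
    have hCpos : (0:ℝ) ≤ (2*σ+1) * R ^ (2*σ) := by
      have := Real.rpow_nonneg hR0 (2*σ); nlinarith
    rw [hK2, Real.le_toNNReal_iff_coe_le hCpos, coe_nnnorm]
    have hnorm : ‖-((2*σ+1) * |x| ^ (2*σ))‖ = (2*σ+1) * |x| ^ (2*σ) := by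
      rw [norm_neg, Real.norm_eq_abs, abs_of_nonneg]
      positivity
    rw [hnorm]
    nlinarith [Real.rpow_nonneg (abs_nonneg x) (2*σ)]
  set v : ℝ → ℝ × ℝ → ℝ × ℝ := fun _ x => (x.2, -(|x.1| ^ (2*σ) * x.1)) with hv0
  set K : ℝ≥0 := max 1 (K2 * 1) with hK
  have hv : ∀ u : ℝ, LipschitzOnWith K (v u) st := by
    intro u
    have hsnd : LipschitzOnWith 1 (fun x : ℝ × ℝ => x.2) st :=
      LipschitzWith.prod_snd.lipschitzOnWith
    have hmaps : MapsTo (fun x : ℝ × ℝ => x.1) st (Icc (-R) R) := by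
      intro x hx
      have : |x.1| ≤ R := hx
      exact mem_Icc.mpr (abs_le.mp this)
    have hcomp : LipschitzOnWith (K2 * 1)
        ((fun u : ℝ => -(|u| ^ (2*σ) * u)) ∘ (fun x : ℝ × ℝ => x.1)) st :=
      hφ.comp LipschitzWith.prod_fst.lipschitzOnWith hmaps
    exact hsnd.prodMk hcomp
  have hFd : ∀ u, HasDerivAt F (v u (F u)) u := fun u => (hdf u).prodMk (hdf' u)
  have hGd : ∀ u, HasDerivAt G (v u (G u)) u := fun u => (hdg u).prodMk (hdg' u)
  have hFs : ∀ u ∈ Ioo (a - b) (a + b), F u ∈ st := by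
    intro u hu
    have h := hC₁ u (Ioo_subset_Icc_self hu)
    have : |f u| ≤ ‖F u‖ := by
      have := norm_fst_le (F u)
      simpa [hF, Real.norm_eq_abs] using this
    exact le_trans this (le_trans h (le_max_left _ _))
  have hGs : ∀ u ∈ Ioo (a - b) (a + b), G u ∈ st := by
    intro u hu
    have h := hC₂ u (Ioo_subset_Icc_self hu)
    have : |g u| ≤ ‖G u‖ := by
      have := norm_fst_le (G u)
      simpa [hG, Real.norm_eq_abs] using this
    exact le_trans this (le_trans h (le_max_right _ _))
  have heqn : EqOn F G (Icc (a - b) (a + b)) := by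
    refine ODE_solution_unique_of_mem_Icc (fun u _ => hv u) (t₀ := a) ⟨by linarith, by linarith⟩
      hFc.continuousOn (fun u _ => hFd u) hFs hGc.continuousOn (fun u _ => hGd u) hGs ?_
    simp only [hF, hG, Prod.ext_iff]
    exact ⟨h1, h2⟩
  exact congrArg Prod.fst (heqn htmem)

/-- The solution of `V'' + |V|^{2σ} V = 0`, `V(0)=1`, `V'(0)=0` (σ>0) is periodic. -/
theorem stmt_0 (σ : ℝ) (hσ : 0 < σ) (V : ℝ → ℝ)
    (hV : ContDiff ℝ 2 V)
    (hode : ∀ t : ℝ, deriv (deriv V) t + |V t| ^ (2 * σ) * V t = 0)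
    (h0 : V 0 = 1) (h0' : deriv V 0 = 0) :
    ∃ T > 0, ∀ t : ℝ, V (t + T) = V t := by
  have h2σ : (0:ℝ) ≤ 2*σ := by linarith
  have hVd : Differentiable ℝ V := hV.differentiable (by norm_num)
  have hV1 : ContDiff ℝ 1 (deriv V) := by
    have h := (contDiff_succ_iff_deriv (n := 1) (f := V)).mp (by exact_mod_cast hV)
    exact h.2.2
  have hV'd : Differentiable ℝ (deriv V) := hV1.differentiable one_ne_zero
  have hD2 : ∀ t, deriv (deriv V) t = -(|V t| ^ (2*σ) * V t) := fun t => by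
    have := hode t; linarith
  have hdV : ∀ t, HasDerivAt V (deriv V t) t := fun t => (hVd t).hasDerivAt
  have hdV' : ∀ t, HasDerivAt (deriv V) (-(|V t| ^ (2*σ) * V t)) t := fun t => by
    have h := (hV'd t).hasDerivAt
    rwa [hD2 t] at h
  -- setup of constants
  set m : ℝ := (1/2 : ℝ) ^ (2*σ) * (1/2) with hm_def
  have hm : 0 < m := by
    have := Real.rpow_pos_of_pos (by norm_num : (0:ℝ) < 1/2) (2*σ)
    positivity
  set M : ℝ := Real.sqrt (8 / m) with hM_def
  have hM : 0 < M := Real.sqrt_pos.mpr (by positivity)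
  have hM2 : M ^ 2 = 8 / m := Real.sq_sqrt (by positivity)
  -- existence of a zero of V in [0, M]
  have hexzero : ∃ s0 ∈ Icc (0:ℝ) M, V s0 ≤ 0 := by
    by_contra hcon
    push_neg at hcon
    have hanti1 : AntitoneOn (deriv V) (Icc 0 M) := by
      apply antitoneOn_of_deriv_nonpos (convex_Icc 0 M) hV'd.continuous.continuousOn
        (fun x _ => (hV'd x).differentiableWithinAt)
      intro x hx
      rw [interior_Icc] at hx
      have hVx : 0 < V x := hcon x (Ioo_subset_Icc_self hx)
      have hnn : 0 ≤ |V x| ^ (2*σ) * V x :=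
        mul_nonneg (Real.rpow_nonneg (abs_nonneg _) _) hVx.le
      rw [hD2 x]; linarith
    have hV'le : ∀ s ∈ Icc (0:ℝ) M, deriv V s ≤ 0 := by
      intro s hs
      have := hanti1 (left_mem_Icc.mpr hM.le) hs hs.1
      rwa [h0'] at this
    have hconc : ConcaveOn ℝ (Icc 0 M) V := by
      apply concaveOn_of_deriv2_nonpos (convex_Icc 0 M) hVd.continuous.continuousOn
        hVd.differentiableOn hV'd.differentiableOn
      intro x hx
      rw [interior_Icc] at hx
      show deriv^[2] V x ≤ 0
      have hit : deriv^[2] V x = deriv (deriv V) x := rfl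
      rw [hit, hD2 x]
      have hVx : 0 < V x := hcon x (Ioo_subset_Icc_self hx)
      have hnn : 0 ≤ |V x| ^ (2*σ) * V x :=
        mul_nonneg (Real.rpow_nonneg (abs_nonneg _) _) hVx.le
      linarith
    have hhalf : ∀ s ∈ Icc (0:ℝ) (M/2), 1/2 ≤ V s := by
      intro s hs
      have hsM : s ≤ M := by linarith [hs.2, hM]
      have h0mem : (0:ℝ) ∈ Icc (0:ℝ) M := left_mem_Icc.mpr hM.le
      have hMmem : M ∈ Icc (0:ℝ) M := right_mem_Icc.mpr hM.le
      have ha : (0:ℝ) ≤ 1 - s/M := by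
        have : s/M ≤ 1 := (div_le_one hM).mpr hsM
        linarith
      have hb : (0:ℝ) ≤ s/M := div_nonneg hs.1 hM.le
      have hcomb := hconc.2 h0mem hMmem ha hb (by ring)
      have hpt : (1 - s/M) • (0:ℝ) + (s/M) • M = s := by
        field_simp
        simp [smul_eq_mul, hM.ne']
      rw [hpt] at hcomb
      have hVM : 0 < V M := hcon M hMmem
      have hsh : s/M ≤ 1/2 := by
        rw [div_le_div_iff₀ hM (by norm_num : (0:ℝ) < 2)]
        linarith [hs.2]
      have : (1 - s/M) • V 0 + (s/M) • V M = (1 - s/M) * 1 + (s/M) * V M := by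
        rw [h0]; simp [smul_eq_mul]
      rw [this] at hcomb
      nlinarith
    -- second derivative bounded above by -m on [0, M/2]
    have hD2le : ∀ s ∈ Icc (0:ℝ) (M/2), deriv (deriv V) s ≤ -m := by
      intro s hs
      have h12 : (1:ℝ)/2 ≤ V s := hhalf s hs
      have habs : |V s| = V s := abs_of_pos (by linarith)
      have hpow : ((1:ℝ)/2) ^ (2*σ) ≤ |V s| ^ (2*σ) := by
        rw [habs]
        exact Real.rpow_le_rpow (by norm_num) h12 h2σ
      have : m ≤ |V s| ^ (2*σ) * V s := by
        rw [hm_def]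
        have h1 : (0:ℝ) ≤ ((1:ℝ)/2) ^ (2*σ) := Real.rpow_nonneg (by norm_num) _
        nlinarith
      rw [hD2 s]; linarith
    -- deriv V s ≤ -m s on [0, M/2]
    have hg1 : ∀ s ∈ Icc (0:ℝ) (M/2), deriv V s ≤ -(m * s) := by
      have hanti2 : AntitoneOn (fun s => deriv V s + m * s) (Icc 0 (M/2)) := by
        apply antitoneOn_of_deriv_nonpos (convex_Icc 0 (M/2))
          (Continuous.continuousOn (show Continuous (fun s : ℝ => deriv V s + m * s) from hV'd.continuous.add (continuous_const.mul continuous_id)))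
        · intro x _
          exact ((hV'd x).hasDerivAt.add ((hasDerivAt_id x).const_mul m)).differentiableAt.differentiableWithinAt
        · intro x hx
          rw [interior_Icc] at hx
          have hd : HasDerivAt (fun s => deriv V s + m * s) (deriv (deriv V) x + m * 1) x :=
            (hV'd x).hasDerivAt.add ((hasDerivAt_id x).const_mul m)
          rw [hd.deriv]
          have := hD2le x (Ioo_subset_Icc_self hx)
          linarith
      intro s hs
      have hM4 : (0:ℝ) ∈ Icc (0:ℝ) (M/2) := left_mem_Icc.mpr (by linarith)
      have := hanti2 hM4 hs hs.1
      simp only [mul_zero, add_zero, h0'] at this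
      linarith
    -- V s ≤ 1 - m s^2/2 on [0, M/2]
    have hanti3 : AntitoneOn (fun s => V s + m/2 * s^2) (Icc 0 (M/2)) := by
      apply antitoneOn_of_deriv_nonpos (convex_Icc 0 (M/2))
        (Continuous.continuousOn (show Continuous (fun s : ℝ => V s + m/2 * s^2) from hVd.continuous.add (continuous_const.mul (continuous_pow 2))))
      · intro x _
        exact ((hVd x).hasDerivAt.add ((hasDerivAt_pow 2 x).const_mul (m/2))).differentiableAt.differentiableWithinAt
      · intro x hx
        rw [interior_Icc] at hx
        have hd : HasDerivAt (fun s => V s + m/2 * s^2) (deriv V x + m/2 * (2 * x^1)) x :=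
          (hVd x).hasDerivAt.add ((hasDerivAt_pow 2 x).const_mul (m/2))
        rw [hd.deriv]
        have := hg1 x (Ioo_subset_Icc_self hx)
        have hxp : 0 ≤ x := le_of_lt hx.1
        nlinarith
    have hMmem2 : M/2 ∈ Icc (0:ℝ) (M/2) := right_mem_Icc.mpr (by linarith)
    have h0mem2 : (0:ℝ) ∈ Icc (0:ℝ) (M/2) := left_mem_Icc.mpr (by linarith)
    have hfin := hanti3 h0mem2 hMmem2 (by linarith)
    simp only [h0] at hfin
    have hVM2 : 0 < V (M/2) := hcon (M/2) ⟨by linarith, by linarith⟩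
    have hm0 : m ≠ 0 := ne_of_gt hm
    have hMsq : (M/2)^2 = 2/m := by
      rw [div_pow, hM2]
      field_simp
      ring
    rw [hMsq] at hfin
    have : m/2 * (2/m) = 1 := by field_simp
    nlinarith
  obtain ⟨s0, hs0, hVs0⟩ := hexzero
  -- IVT gives a zero t₁ of V
  have hivt := intermediate_value_Icc' hs0.1 hVd.continuous.continuousOn
  have h0img : (0:ℝ) ∈ Icc (V s0) (V 0) := ⟨hVs0, by rw [h0]; norm_num⟩
  obtain ⟨t₁, ht₁mem, ht₁⟩ := hivt h0img
  have ht₁pos : 0 < t₁ := by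
    rcases lt_or_eq_of_le ht₁mem.1 with h | h
    · exact h
    · exfalso; rw [← h] at ht₁; rw [h0] at ht₁; norm_num at ht₁
  -- evenness
  have heven : ∀ t, V (-t) = V t := by
    refine ode_unique σ hσ (fun t => V (-t)) V (fun t => -deriv V (-t)) (deriv V)
      ?_ ?_ hdV hdV' 0 (by norm_num) (by simp [h0'])
    · intro t
      have h := HasDerivAt.comp t (hdV (-t)) (hasDerivAt_neg t)
      have h' : HasDerivAt (fun t => V (-t)) (deriv V (-t) * (-1)) t := h
      convert h' using 1
      ring
    · intro t
      have h := (HasDerivAt.comp t (hdV' (-t)) (hasDerivAt_neg t)).neg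
      have h' : HasDerivAt (fun t => -deriv V (-t)) (-(-(|V (-t)| ^ (2*σ) * V (-t)) * (-1))) t := h
      convert h' using 1
      ring
  -- odd reflection about t₁
  have hodd : ∀ t, -V (2*t₁ - t) = V t := by
    have hinner : ∀ t : ℝ, HasDerivAt (fun s : ℝ => 2*t₁ - s) (-1) t := fun t =>
      (hasDerivAt_id t).const_sub (2*t₁)
    refine ode_unique σ hσ (fun t => -V (2*t₁ - t)) V (fun t => deriv V (2*t₁ - t)) (deriv V)
      ?_ ?_ hdV hdV' t₁ ?_ ?_
    · intro t
      have h := (HasDerivAt.comp t (hdV (2*t₁ - t)) (hinner t)).neg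
      have h' : HasDerivAt (fun t => -V (2*t₁ - t)) (-(deriv V (2*t₁ - t) * (-1))) t := h
      convert h' using 1
      ring
    · intro t
      have h := HasDerivAt.comp t (hdV' (2*t₁ - t)) (hinner t)
      have h' : HasDerivAt (fun t => deriv V (2*t₁ - t))
          (-(|V (2*t₁ - t)| ^ (2*σ) * V (2*t₁ - t)) * (-1)) t := h
      convert h' using 1
      rw [abs_neg]
      ring
    · have he : 2*t₁ - t₁ = t₁ := by ring
      simp only [he, ht₁]
      norm_num
    · have he : 2*t₁ - t₁ = t₁ := by ring
      simp only [he]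
  -- assemble periodicity
  have hshift : ∀ t, V (t + 2*t₁) = -V t := by
    intro t
    have h1 := hodd (-t)
    have h2 := heven t
    have he : 2*t₁ - (-t) = t + 2*t₁ := by ring
    rw [he] at h1
    linarith
  refine ⟨4*t₁, by linarith, fun t => ?_⟩
  have ha := hshift (t + 2*t₁)
  have hb := hshift t
  have he : t + 2*t₁ + 2*t₁ = t + 4*t₁ := by ring
  rw [he] at ha
  linarith
end

section
/- Let W : ℝ → ℝ be a nontrivial continuous periodic function, σ ≥ 0, and 0 < A < B. Then there exist c > 0 and λ₀ > 0 such that for all λ ≥ λ₀, ∫_A^B |s|^{2σ} |W(λ s)|² ds ≥ c. -/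
open MeasureTheory intervalIntegral Set

/-- Uniform lower bound for `∫_A^B |s|^{2σ}|W(λs)|² ds`. -/
theorem stmt_4 (W : ℝ → ℝ) (hW : Continuous W) (T : ℝ) (hT : 0 < T)
    (hper : Function.Periodic W T) (hnz : ∃ t, W t ≠ 0)
    (σ : ℝ) (hσ : 0 ≤ σ) (A B : ℝ) (hA : 0 < A) (hAB : A < B) :
    ∃ c > 0, ∃ lam₀ > 0, ∀ lam : ℝ, lam₀ ≤ lam →
      c ≤ ∫ s in A..B, |s| ^ (2*σ) * (W (lam * s)) ^ 2 := by
  obtain ⟨t, ht⟩ := hnz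
  set g : ℝ → ℝ := fun x => W x ^ 2 with hg
  have hgc : Continuous g := hW.pow 2
  have hgper : Function.Periodic g T := fun x => by simp only [hg]; rw [hper x]
  have hgint : ∀ a b : ℝ, IntervalIntegrable g volume a b :=
    fun a b => hgc.intervalIntegrable a b
  set m := ∫ x in (0:ℝ)..T, g x with hm
  have hmpos : 0 < m := by
    have h0 : (0:ℝ) ≤ t - ⌊t / T⌋ * T := by
      have := Int.floor_le (t / T)
      have h2 : (⌊t / T⌋ : ℝ) * T ≤ t / T * T := mul_le_mul_of_nonneg_right this hT.le
      rw [div_mul_cancel₀ _ hT.ne'] at h2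
      linarith
    have h1 : t - ⌊t / T⌋ * T ≤ T := by
      have := Int.lt_floor_add_one (t / T)
      have h2 : t / T * T < ((⌊t / T⌋ : ℝ) + 1) * T := mul_lt_mul_of_pos_right this hT
      rw [div_mul_cancel₀ _ hT.ne'] at h2
      nlinarith
    have heq : g (t - ⌊t / T⌋ * T) = g t := by
      simp only [hg]; rw [hper.sub_int_mul_eq]
    refine intervalIntegral.integral_pos hT hgc.continuousOn
      (fun x _ => sq_nonneg _) ⟨t - ⌊t / T⌋ * T, ⟨h0, h1⟩, ?_⟩
    rw [heq]
    positivity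
  have hBA : (0:ℝ) < B - A := by linarith
  refine ⟨A ^ (2*σ) * ((B - A) / (2*T) * m),
    mul_pos (Real.rpow_pos_of_pos hA _) (mul_pos (div_pos hBA (by positivity)) hmpos),
    2*T/(B-A), div_pos (by positivity) hBA, ?_⟩
  intro lam hlam
  have hlam0 : 0 < lam := lt_of_lt_of_le (by positivity) hlam
  set x := lam * (B - A) / T with hx
  have hx2 : (2:ℝ) ≤ x := by
    rw [hx, le_div_iff₀ hT]
    have h := mul_le_mul_of_nonneg_right hlam (by linarith : (0:ℝ) ≤ B - A)
    rw [div_mul_cancel₀ _ (by linarith : B - A ≠ 0)] at h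
    linarith
  set n : ℤ := ⌊x⌋ with hn
  have hnlow : lam * (B - A) / (2*T) ≤ (n:ℝ) := by
    have h1 : x - 1 < (n:ℝ) := Int.sub_one_lt_floor _
    have h2 : lam * (B - A) / (2*T) = x / 2 := by rw [hx]; ring
    linarith
  have hn1 : (1:ℝ) ≤ (n:ℝ) := by
    have : (1:ℝ) ≤ lam * (B - A) / (2*T) := by
      have := div_pos (mul_pos hlam0 (by linarith : (0:ℝ) < B - A)) (by positivity : (0:ℝ) < 2*T)
      linarith [hnlow, hx2, (by rw [hx]; ring : lam * (B - A) / (2*T) = x / 2)]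
    linarith
  have hnT : lam * A + (n:ℝ) * T ≤ lam * B := by
    have h1 : (n:ℝ) ≤ x := Int.floor_le _
    have h2 : (n:ℝ) * T ≤ x * T := mul_le_mul_of_nonneg_right h1 hT.le
    rw [hx, div_mul_cancel₀ _ hT.ne'] at h2
    nlinarith
  -- the periodic integral over n periods
  have hper_int : ∫ s in lam*A..(lam*A + (n:ℝ) * T), g s = (n:ℝ) * m := by
    have h1 := hgper.intervalIntegral_add_zsmul_eq n (lam*A) hgint
    have h2 := hgper.intervalIntegral_add_eq (lam*A) 0
    rw [zero_add] at h2
    rw [show lam*A + (n:ℝ)*T = lam*A + n • T by simp [zsmul_eq_mul], h1, h2, ← hm,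
      zsmul_eq_mul]
  have hmono : (n:ℝ) * m ≤ ∫ s in lam*A..lam*B, g s := by
    rw [← hper_int]
    refine intervalIntegral.integral_mono_interval le_rfl ?_ hnT
      (Filter.Eventually.of_forall fun y => sq_nonneg _) (hgint _ _)
    nlinarith
  -- change of variables
  have hcov : ∫ s in A..B, g (lam * s) = lam⁻¹ * ∫ s in lam*A..lam*B, g s := by
    rw [intervalIntegral.integral_comp_mul_left g hlam0.ne']
    simp [smul_eq_mul]
  -- pointwise comparison
  have hcont2 : Continuous fun s : ℝ => |s| ^ (2*σ) * g (lam * s) :=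
    (continuous_abs.rpow_const fun y => Or.inr (by positivity)).mul
      (hgc.comp (continuous_const.mul continuous_id))
  have hstep : ∫ s in A..B, A ^ (2*σ) * g (lam * s) ≤
      ∫ s in A..B, |s| ^ (2*σ) * g (lam * s) := by
    refine intervalIntegral.integral_mono_on hAB.le
      ((continuous_const.mul (hgc.comp (continuous_const.mul continuous_id))).intervalIntegrable _ _)
      (hcont2.intervalIntegrable _ _) fun s hs => ?_
    have hAs : A ≤ |s| := le_trans hs.1 (le_abs_self s)
    exact mul_le_mul_of_nonneg_right (Real.rpow_le_rpow hA.le hAs (by positivity)) (sq_nonneg _)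
  have hconst : ∫ s in A..B, A ^ (2*σ) * g (lam * s) =
      A ^ (2*σ) * ∫ s in A..B, g (lam * s) := intervalIntegral.integral_const_mul _ _
  have hfinal : (B - A) / (2*T) * m ≤ lam⁻¹ * ∫ s in lam*A..lam*B, g s := by
    have h1 : (B - A) / (2*T) * m ≤ lam⁻¹ * ((n:ℝ) * m) := by
      have h2 : lam * (B - A) / (2*T) * m ≤ (n:ℝ) * m :=
        mul_le_mul_of_nonneg_right hnlow hmpos.le
      have h3 : lam⁻¹ * (lam * (B - A) / (2*T) * m) = (B - A) / (2*T) * m := by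
        field_simp
      rw [← h3]
      exact mul_le_mul_of_nonneg_left h2 (by positivity)
    exact h1.trans (mul_le_mul_of_nonneg_left hmono (by positivity))
  calc A ^ (2*σ) * ((B - A) / (2*T) * m)
      ≤ A ^ (2*σ) * (lam⁻¹ * ∫ s in lam*A..lam*B, g s) :=
        mul_le_mul_of_nonneg_left hfinal (by positivity)
    _ = ∫ s in A..B, A ^ (2*σ) * g (lam * s) := by rw [hconst, hcov]
    _ ≤ ∫ s in A..B, |s| ^ (2*σ) * g (lam * s) := hstep
    _ = ∫ s in A..B, |s| ^ (2*σ) * (W (lam * s)) ^ 2 := rfl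
end

section
/- Let e : [0,T] → [0,∞) be continuous with e(0) = 0, and suppose e satisfies the integral inequality e(t) ≤ α t + β ∫₀^t e(τ)(1 + e(τ)^{2σ}) dτ for constants α, β > 0 and σ > 0. If α T e^{2βT} ≤ (2βT)^{-1/(2σ)} ∧ 1 (a smallness condition ensuring e stays bounded by 1), then e(t) ≤ α t e^{2βt} for all t ∈ [0,T]. -/
open Set Real MeasureTheory intervalIntegral

theorem key_gronwall (T α β σ : ℝ) (hT : 0 < T) (hα : 0 < α) (hβ : 0 < β) (hσ : 0 < σ)
    (e : ℝ → ℝ) (hcont : ContinuousOn e (Set.Icc 0 T))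
    (hnonneg : ∀ t ∈ Set.Icc (0:ℝ) T, 0 ≤ e t)
    (hineq : ∀ t ∈ Set.Icc (0:ℝ) T,
      e t ≤ α * t + β * ∫ τ in (0:ℝ)..t, e τ * (1 + e τ ^ (2*σ)))
    (t₀ : ℝ) (ht₀ : t₀ ∈ Set.Icc (0:ℝ) T) (hle1 : ∀ τ ∈ Set.Icc (0:ℝ) t₀, e τ ≤ 1) :
    ∀ t ∈ Set.Icc (0:ℝ) t₀, e t ≤ α * t * Real.exp (2*β*t) := by
  obtain ⟨ht₀0, ht₀T⟩ := ht₀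
  have hsub : Set.Icc (0:ℝ) t₀ ⊆ Set.Icc 0 T := Set.Icc_subset_Icc le_rfl ht₀T
  set g : ℝ → ℝ := fun u => α * u + 2 * β * ∫ τ in (0:ℝ)..u, e τ with hg
  -- integrability of e on subintervals
  have hint : ∀ x ∈ Set.Icc (0:ℝ) t₀, IntervalIntegrable e volume 0 x := by
    intro x hx
    apply ContinuousOn.intervalIntegrable
    rw [Set.uIcc_of_le hx.1]
    exact hcont.mono (Set.Icc_subset_Icc le_rfl (hx.2.trans ht₀T))
  -- step A : e ≤ g on Icc 0 t₀
  have hA : ∀ t ∈ Set.Icc (0:ℝ) t₀, e t ≤ g t := by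
    intro t ht
    have h1 := hineq t (hsub ht)
    have h2 : (∫ τ in (0:ℝ)..t, e τ * (1 + e τ ^ (2*σ))) ≤ ∫ τ in (0:ℝ)..t, 2 * e τ := by
      apply intervalIntegral.integral_mono_on ht.1
      · apply ContinuousOn.intervalIntegrable
        rw [Set.uIcc_of_le ht.1]
        have hce : ContinuousOn e (Set.Icc 0 t) :=
          hcont.mono (Set.Icc_subset_Icc le_rfl (ht.2.trans ht₀T))
        exact hce.mul (continuousOn_const.add (hce.rpow_const fun x _ => Or.inr (by positivity)))
      · exact (hint t ht).const_mul 2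
      · intro τ hτ
        have hτ' : τ ∈ Set.Icc (0:ℝ) t₀ := Set.Icc_subset_Icc le_rfl ht.2 hτ
        have h01 : 0 ≤ e τ := hnonneg τ (hsub hτ')
        have h11 : e τ ≤ 1 := hle1 τ hτ'
        have hr : e τ ^ (2*σ) ≤ 1 := Real.rpow_le_one h01 h11 (by positivity)
        nlinarith
    calc e t ≤ α * t + β * ∫ τ in (0:ℝ)..t, e τ * (1 + e τ ^ (2*σ)) := h1
      _ ≤ α * t + β * ∫ τ in (0:ℝ)..t, 2 * e τ := by nlinarith
      _ = g t := by rw [intervalIntegral.integral_const_mul]; ring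
  -- g nonneg
  have hgpos : ∀ t ∈ Set.Icc (0:ℝ) t₀, 0 ≤ g t := by
    intro t ht
    have : 0 ≤ ∫ τ in (0:ℝ)..t, e τ := by
      apply intervalIntegral.integral_nonneg ht.1
      intro u hu
      exact hnonneg u (hsub (Set.Icc_subset_Icc le_rfl ht.2 hu))
    have := ht.1
    positivity
  -- continuity of g
  have hgcont : ContinuousOn g (Set.Icc 0 t₀) := by
    apply (continuousOn_const.mul continuousOn_id).add (continuousOn_const.mul _)
    have := intervalIntegral.continuousOn_primitive_interval
      (f := e) (μ := volume) (a := (0:ℝ)) (b := t₀) ?_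
    · rwa [Set.uIcc_of_le ht₀0] at this
    · rw [Set.uIcc_of_le ht₀0]
      exact (hcont.mono (Set.Icc_subset_Icc le_rfl ht₀T)).integrableOn_compact isCompact_Icc
  -- derivative of g
  have hgderiv : ∀ x ∈ Set.Ico (0:ℝ) t₀, HasDerivWithinAt g (α + 2 * β * e x) (Set.Ici x) x := by
    intro x hx
    have hxT : x < T := lt_of_lt_of_le hx.2 ht₀T
    have hmemIcc : Set.Icc x T ∈ nhdsWithin x (Set.Ioi x) :=
      Filter.mem_of_superset
        (Filter.inter_mem self_mem_nhdsWithin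
          (mem_nhdsWithin_of_mem_nhds (Iic_mem_nhds hxT)))
        (fun y hy => ⟨le_of_lt hy.1, hy.2⟩)
    have hmeas : StronglyMeasurableAtFilter e (nhdsWithin x (Set.Ioi x)) volume := by
      refine ⟨Set.Icc x T, hmemIcc, ?_⟩
      exact ((hcont.mono (Set.Icc_subset_Icc hx.1 le_rfl)).aestronglyMeasurable measurableSet_Icc)
    have hcw : ContinuousWithinAt e (Set.Ioi x) x := by
      have h1 : ContinuousWithinAt e (Set.Icc 0 T) x :=
        hcont x ⟨hx.1, hxT.le⟩
      apply h1.mono_of_mem_nhdsWithin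
      exact Filter.mem_of_superset hmemIcc (fun y hy => ⟨hx.1.trans hy.1, hy.2⟩)
    have hd1 : HasDerivWithinAt (fun u => α * u) α (Set.Ici x) x := by
      simpa using ((hasDerivAt_id x).const_mul α).hasDerivWithinAt
    have hd2 : HasDerivWithinAt (fun u => ∫ τ in (0:ℝ)..u, e τ) (e x) (Set.Ici x) x :=
      intervalIntegral.integral_hasDerivWithinAt_right (s := Set.Ici x) (t := Set.Ioi x)
        (hint x ⟨hx.1, hx.2.le⟩) hmeas hcw
    exact hd1.add (hd2.const_mul (2*β))
  -- Gronwall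
  have hgron := norm_le_gronwallBound_of_norm_deriv_right_le (δ := 0) (K := 2*β) (ε := α)
    hgcont hgderiv (by simp [hg, Real.norm_eq_abs]) ?_
  · intro t ht
    have h1 := hgron t ht
    rw [gronwallBound_of_K_ne_0 (ne_of_gt (by positivity))] at h1
    simp only [Real.norm_eq_abs, abs_of_nonneg (hgpos t ht), sub_zero, zero_mul, zero_add] at h1
    have h2 : e t ≤ α / (2*β) * (Real.exp (2*β*t) - 1) := (hA t ht).trans h1
    have hx : (0:ℝ) ≤ 2*β*t := mul_nonneg (by positivity) ht.1
    have h3 : 1 - 2*β*t ≤ Real.exp (-(2*β*t)) := by linarith [Real.add_one_le_exp (-(2*β*t))]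
    have h4 : Real.exp (-(2*β*t)) * Real.exp (2*β*t) = 1 := by
      rw [← Real.exp_add]; simp
    have h5 : Real.exp (2*β*t) - 1 ≤ 2*β*t * Real.exp (2*β*t) := by
      nlinarith [Real.exp_pos (2*β*t)]
    calc e t ≤ α / (2*β) * (Real.exp (2*β*t) - 1) := h2
      _ ≤ α / (2*β) * (2*β*t * Real.exp (2*β*t)) := by
          apply mul_le_mul_of_nonneg_left h5 (by positivity)
      _ = α * t * Real.exp (2*β*t) := by field_simp
  · intro x hx
    have he0 : 0 ≤ e x := hnonneg x (hsub ⟨hx.1, hx.2.le⟩)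
    have hgx : 0 ≤ g x := hgpos x ⟨hx.1, hx.2.le⟩
    have := hA x ⟨hx.1, hx.2.le⟩
    rw [Real.norm_eq_abs, Real.norm_eq_abs, abs_of_nonneg (by positivity), abs_of_nonneg hgx]
    nlinarith

/-- Nonlinear Gronwall bootstrap: if `e(t) ≤ αt + β∫₀^t e(1+e^{2σ})` and the smallness
condition `αT e^{2βT} ≤ min((2βT)^{-1/(2σ)}, 1)` holds, then `e(t) ≤ αt e^{2βt}` on `[0,T]`. -/
theorem stmt_16 (T α β σ : ℝ) (hT : 0 < T) (hα : 0 < α) (hβ : 0 < β) (hσ : 0 < σ)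
    (e : ℝ → ℝ) (hcont : ContinuousOn e (Set.Icc 0 T))
    (hnonneg : ∀ t ∈ Set.Icc (0:ℝ) T, 0 ≤ e t) (h0 : e 0 = 0)
    (hineq : ∀ t ∈ Set.Icc (0:ℝ) T,
      e t ≤ α * t + β * ∫ τ in (0:ℝ)..t, e τ * (1 + e τ ^ (2*σ)))
    (hsmall : α * T * Real.exp (2*β*T) ≤ min ((2*β*T) ^ (-(1/(2*σ)))) 1) :
    ∀ t ∈ Set.Icc (0:ℝ) T, e t ≤ α * t * Real.exp (2*β*t) := by
  have hsmall1 : α * T * Real.exp (2*β*T) ≤ 1 := hsmall.trans (min_le_right _ _)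
  set A : Set ℝ := {t | t ∈ Set.Icc (0:ℝ) T ∧ ∀ τ ∈ Set.Icc (0:ℝ) t, e τ ≤ 1} with hA
  have h0A : (0:ℝ) ∈ A := by
    refine ⟨⟨le_rfl, hT.le⟩, fun τ hτ => ?_⟩
    have : τ = 0 := le_antisymm hτ.2 hτ.1
    simp [this, h0]
  have hbdd : BddAbove A := ⟨T, fun x hx => hx.1.2⟩
  have hAne : A.Nonempty := ⟨0, h0A⟩
  set s := sSup A with hs
  have hs0 : 0 ≤ s := le_csSup hbdd h0A
  have hsT : s ≤ T := csSup_le hAne fun x hx => hx.1.2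
  -- e ≤ 1 on [0, s)
  have hlt : ∀ τ ∈ Set.Ico (0:ℝ) s, e τ ≤ 1 := by
    intro τ hτ
    obtain ⟨a, haA, hτa⟩ := exists_lt_of_lt_csSup hAne hτ.2
    exact haA.2 τ ⟨hτ.1, hτa.le⟩
  -- e s ≤ 1
  have hes : e s ≤ 1 := by
    rcases eq_or_lt_of_le hs0 with h | h
    · simp [← h, h0]
    · have hne : (nhdsWithin s (Set.Iio s)).NeBot := by
        exact nhdsLT_neBot s
      have htend : Filter.Tendsto e (nhdsWithin s (Set.Iio s)) (nhds (e s)) := by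
        have h1 : ContinuousWithinAt e (Set.Icc 0 T) s := hcont s ⟨hs0, hsT⟩
        apply h1.mono_of_mem_nhdsWithin
        refine Filter.mem_of_superset
          (Filter.inter_mem self_mem_nhdsWithin
            (mem_nhdsWithin_of_mem_nhds (Ici_mem_nhds h))) ?_
        exact fun y hy => ⟨hy.2, (le_of_lt hy.1).trans hsT⟩
      refine le_of_tendsto htend ?_
      refine Filter.eventually_of_mem
        (Filter.inter_mem self_mem_nhdsWithin
          (mem_nhdsWithin_of_mem_nhds (Ici_mem_nhds h))) ?_
      exact fun y hy => hlt y ⟨hy.2, hy.1⟩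
  have hsA : s ∈ A := by
    refine ⟨⟨hs0, hsT⟩, fun τ hτ => ?_⟩
    rcases eq_or_lt_of_le hτ.2 with h | h
    · rw [h]; exact hes
    · exact hlt τ ⟨hτ.1, h⟩
  -- s = T
  have hsTeq : s = T := by
    by_contra hne
    have hslt : s < T := lt_of_le_of_ne hsT hne
    have hkey := key_gronwall T α β σ hT hα hβ hσ e hcont hnonneg hineq s ⟨hs0, hsT⟩ hsA.2
    have hes1 : e s < 1 := by
      have h1 : e s ≤ α * s * Real.exp (2*β*s) := hkey s ⟨hs0, le_rfl⟩
      have h2 : Real.exp (2*β*s) ≤ Real.exp (2*β*T) :=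
        Real.exp_le_exp.2 (by nlinarith)
      have hb1 : α * s * Real.exp (2*β*s) ≤ α * s * Real.exp (2*β*T) :=
        mul_le_mul_of_nonneg_left h2 (mul_nonneg hα.le hs0)
      have hb2 : α * s * Real.exp (2*β*T) < α * T * Real.exp (2*β*T) := by
        have : α * s < α * T := by nlinarith
        nlinarith [Real.exp_pos (2*β*T)]
      linarith
    -- continuity gives a neighborhood where e < 1
    have hcw : ContinuousWithinAt e (Set.Icc 0 T) s := hcont s ⟨hs0, hsT⟩
    have hev : ∀ᶠ x in nhdsWithin s (Set.Icc 0 T), e x < 1 :=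
      hcw.eventually_lt_const hes1
    obtain ⟨δ, hδ, hball⟩ := Metric.mem_nhdsWithin_iff.1 hev
    set t' := min T (s + δ/2) with ht'
    have hst' : s < t' := lt_min hslt (by linarith)
    have ht'A : t' ∈ A := by
      refine ⟨⟨hs0.trans hst'.le, min_le_left _ _⟩, fun τ hτ => ?_⟩
      rcases le_or_gt τ s with hc | hc
      · exact hsA.2 τ ⟨hτ.1, hc⟩
      · have hτT : τ ≤ T := hτ.2.trans (min_le_left _ _)
        have hd : dist τ s < δ := by
          rw [Real.dist_eq, abs_of_nonneg (by linarith)]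
          have : τ ≤ s + δ/2 := hτ.2.trans (min_le_right _ _)
          linarith
        exact le_of_lt (hball ⟨Metric.mem_ball.2 hd, hτ.1, hτT⟩)
    exact absurd (le_csSup hbdd ht'A) (not_le.2 hst')
  have hall : ∀ τ ∈ Set.Icc (0:ℝ) T, e τ ≤ 1 := by rw [← hsTeq]; exact hsA.2
  exact key_gronwall T α β σ hT hα hβ hσ e hcont hnonneg hineq T ⟨hT.le, le_rfl⟩ hall
end
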